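/- Suppose moreover u is nonzero, let w ∈ K satisfy w² = (v−1)² + 4u, and set δ := (v−1−2u+w)/(2u) (assume the characteristic of K is not 2). Then u(δ+1)² − (v−1)(δ+1) − 1 = 0, and the element T := R + δER satisfies T² = 1 + ((v−1)(v−1+w)/(2u))·(E + ET). -/

import Mathlib

/-- In an associative unital `K`-algebra with `E² = E`, `ER = RE` and
`R² = 1 + (u−1)E + (v−1)ER`, if `char K ≠ 2`, `u ≠ 0`, `w² = (v−1)² + 4u` and
`δ := (v−1−2u+w)/(2u)`, then `δ` is a root of `u(z+1)² − (v−1)(z+1) − 1` and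
`T := R + δER` satisfies `T² = 1 + ((v−1)(v−1+w)/(2u))(E + ET)`. -/
theorem bt_explicit_root_quadratic
    (K : Type*) [Field K] (u v : K)
    (A : Type*) [Ring A] [Algebra K A]
    (E R : A)
    (hE : E * E = E)
    (hER : E * R = R * E)
    (hquad : R * R = 1 + (u - 1) • E + (v - 1) • (E * R))
    (hchar : (2 : K) ≠ 0)
    (hu : u ≠ 0)
    (w : K) (hw : w^2 = (v - 1)^2 + 4 * u)
    (δ : K) (hδ : δ = (v - 1 - 2 * u + w) / (2 * u)) :
    u * (δ + 1)^2 - (v - 1) * (δ + 1) - 1 = 0 ∧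
    (R + δ • (E * R)) * (R + δ • (E * R)) =
      1 + ((v - 1) * (v - 1 + w) / (2 * u)) •
        (E + E * (R + δ • (E * R))) := by
  have h2u : (2 : K) * u ≠ 0 := mul_ne_zero hchar hu
  have h1 : δ + 1 = (v - 1 + w) / (2 * u) := by
    rw [hδ]; field_simp; ring
  have hpoly : u * (δ + 1)^2 - (v - 1) * (δ + 1) - 1 = 0 := by
    rw [h1]
    field_simp
    linear_combination hw
  refine ⟨hpoly, ?_⟩
  have hc : (v - 1) * (v - 1 + w) / (2 * u) = (v - 1) * (δ + 1) := by
    rw [h1]; ring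
  rw [hc]
  have hEER : E * (E * R) = E * R := by rw [← mul_assoc, hE]
  have hRER : R * (E * R) = E * (R * R) := by
    rw [← mul_assoc, ← hER, mul_assoc]
  have hERR : (E * R) * R = E * (R * R) := by rw [mul_assoc]
  have hERER : (E * R) * (E * R) = E * (R * R) := by
    rw [mul_assoc, hRER, ← mul_assoc, hE]
  have hERR2 : E * (R * R) = u • E + (v - 1) • (E * R) := by
    rw [hquad, mul_add, mul_add, mul_one, mul_smul_comm, mul_smul_comm, hE, hEER]
    match_scalars <;> ring
  have hET : E * (R + δ • (E * R)) = (1 + δ) • (E * R) := by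
    rw [mul_add, mul_smul_comm, hEER]
    match_scalars <;> ring
  rw [hET]
  have hexp : (R + δ • (E * R)) * (R + δ • (E * R))
      = R * R + δ • (R * (E * R)) + δ • ((E * R) * R) + (δ * δ) • ((E * R) * (E * R)) := by
    simp only [mul_add, add_mul, mul_smul_comm, smul_mul_assoc, smul_smul, smul_add]
    abel
  rw [hexp, hRER, hERR, hERER, hERR2, hquad]
  match_scalars
  · ring
  · linear_combination hpoly
  · ring
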